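/- Let λ_{i1} > 0, λ_{i2} ≥ 0, μ_i > 0 for i = 1, 2. If μ₁ ≥ μ₂, λ₁₁ ≤ λ₂₁ and 2(λ₂₁ − λ₁₁) − λ₁₂ + λ₂₂ + μ₂ − μ₁ ≥ 0, then the ratio t ↦ φ^W_1(t)/φ^W_2(t) is monotone increasing on (0, ∞), i.e. τ^W_1 ≥_lr τ^W_2. -/

import Mathlib

/-- `a_i = sqrt((λ_{i2} + μ_i)² + 4 λ_{i1} μ_i)` for the warm standby system. -/
noncomputable def aW (l1 l2 m : ℝ) : ℝ := Real.sqrt ((l2 + m) ^ 2 + 4 * l1 * m)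

/-- Density of the lifetime of the Markovian two-unit warm standby system. -/
noncomputable def phiW (l1 l2 m t : ℝ) : ℝ :=
  Real.exp (-((2 * l1 + l2 + m) * t / 2)) * (2 * l1 * (l1 + l2) / aW l1 l2 m) *
    Real.sinh (aW l1 l2 m * t / 2)


lemma keyG (α β c : ℝ) (hα : 0 < α) (hβ : 0 < β) (hc : 0 ≤ c) (hcb : β ≤ c + α)
    {t : ℝ} (ht : 0 ≤ t) :
    β * Real.sinh (α * t) * Real.cosh (β * t) ≤
      c * Real.sinh (α * t) * Real.sinh (β * t) + α * Real.cosh (α * t) * Real.sinh (β * t) := by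
  set G : ℝ → ℝ := fun t => c * Real.sinh (α * t) * Real.sinh (β * t)
    + α * Real.cosh (α * t) * Real.sinh (β * t) - β * Real.sinh (α * t) * Real.cosh (β * t)
    with hG
  have hderiv : ∀ x : ℝ, HasDerivAt G
      (c * (α * Real.cosh (α * x) * Real.sinh (β * x) + β * Real.sinh (α * x) * Real.cosh (β * x))
        + (α ^ 2 - β ^ 2) * Real.sinh (α * x) * Real.sinh (β * x)) x := by
    intro x
    have ha : HasDerivAt (fun t : ℝ => α * t) α x := by
      simpa using (hasDerivAt_id x).const_mul α
    have hb : HasDerivAt (fun t : ℝ => β * t) β x := by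
      simpa using (hasDerivAt_id x).const_mul β
    have h1 := ((ha.sinh.const_mul c).mul hb.sinh)
    have h2 := ((ha.cosh.const_mul α).mul hb.sinh)
    have h3 := ((ha.sinh.const_mul β).mul hb.cosh)
    have := (h1.add h2).sub h3
    refine this.congr_deriv ?_
    ring
  have hmono : MonotoneOn G (Set.Ici 0) := by
    apply monotoneOn_of_deriv_nonneg (convex_Ici 0)
    · exact fun x _ => ((hderiv x).continuousAt).continuousWithinAt
    · intro x _
      exact ((hderiv x).differentiableAt).differentiableWithinAt
    · intro x hx
      rw [interior_Ici] at hx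
      rw [(hderiv x).deriv]
      have hx0 : (0:ℝ) ≤ x := le_of_lt hx
      have hsa : 0 ≤ Real.sinh (α * x) := by
        rw [Real.sinh_nonneg_iff]; positivity
      have hsb : 0 ≤ Real.sinh (β * x) := by
        rw [Real.sinh_nonneg_iff]; positivity
      have hca : Real.sinh (α * x) ≤ Real.cosh (α * x) := by
        nlinarith [Real.cosh_sub_sinh (α * x), Real.exp_pos (-(α * x))]
      have hcb' : Real.sinh (β * x) ≤ Real.cosh (β * x) := by
        nlinarith [Real.cosh_sub_sinh (β * x), Real.exp_pos (-(β * x))]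
      rcases le_total β α with h | h
      · have h1 : 0 ≤ (α ^ 2 - β ^ 2) := by nlinarith
        nlinarith [mul_nonneg hsa hsb, mul_nonneg (hsa.trans hca) hsb,
          mul_nonneg hsa (hsb.trans hcb'),
          mul_nonneg (mul_nonneg hα.le (hsa.trans hca)) hsb,
          mul_nonneg (mul_nonneg hβ.le hsa) (hsb.trans hcb')]
      · -- α ≤ β
        have key : 0 ≤ (β - α) * (α * Real.sinh (β * x) * (Real.cosh (α * x) - Real.sinh (α * x))
            + β * Real.sinh (α * x) * (Real.cosh (β * x) - Real.sinh (β * x))) := by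
          apply mul_nonneg (by linarith)
          have := mul_nonneg (mul_nonneg hα.le hsb) (sub_nonneg.2 hca)
          have := mul_nonneg (mul_nonneg hβ.le hsa) (sub_nonneg.2 hcb')
          linarith
        have hX : 0 ≤ α * Real.cosh (α * x) * Real.sinh (β * x)
            + β * Real.sinh (α * x) * Real.cosh (β * x) := by
          have := mul_nonneg (mul_nonneg hα.le (hsa.trans hca)) hsb
          have := mul_nonneg (mul_nonneg hβ.le hsa) (hsb.trans hcb')
          linarith
        nlinarith [mul_nonneg (by linarith : (0:ℝ) ≤ c - (β - α)) hX]
  have h0 : G 0 = 0 := by simp [hG]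
  have := hmono (Set.self_mem_Ici) (Set.mem_Ici.2 ht) ht
  rw [h0] at this
  simp only [hG] at this
  linarith

lemma monoAux (α β c K : ℝ) (hα : 0 < α) (hβ : 0 < β) (hK : 0 ≤ K) (hc : 0 ≤ c)
    (hcb : β ≤ c + α) :
    MonotoneOn (fun t : ℝ => K * Real.exp (c * t) * Real.sinh (α * t) / Real.sinh (β * t))
      (Set.Ioi (0 : ℝ)) := by
  set d : ℝ → ℝ := fun x => ((K * Real.exp (c * x) * c * Real.sinh (α * x)
          + K * Real.exp (c * x) * (Real.cosh (α * x) * α)) * Real.sinh (β * x)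
        - K * Real.exp (c * x) * Real.sinh (α * x) * (Real.cosh (β * x) * β))
        / (Real.sinh (β * x)) ^ 2 with hd
  have hD : ∀ x ∈ Set.Ioi (0:ℝ), HasDerivAt
      (fun t : ℝ => K * Real.exp (c * t) * Real.sinh (α * t) / Real.sinh (β * t)) (d x) x := by
    intro x hx
    have hsb : 0 < Real.sinh (β * x) := by
      rw [Real.sinh_pos_iff]; exact mul_pos hβ hx
    have ha : HasDerivAt (fun t : ℝ => α * t) α x := by
      simpa using (hasDerivAt_id x).const_mul α
    have hb : HasDerivAt (fun t : ℝ => β * t) β x := by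
      simpa using (hasDerivAt_id x).const_mul β
    have hcd : HasDerivAt (fun t : ℝ => c * t) c x := by
      simpa using (hasDerivAt_id x).const_mul c
    have hN : HasDerivAt (fun t : ℝ => K * Real.exp (c * t) * Real.sinh (α * t))
        ((K * Real.exp (c * x) * c) * Real.sinh (α * x)
          + K * Real.exp (c * x) * (Real.cosh (α * x) * α)) x := by
      have hE : HasDerivAt (fun t : ℝ => K * Real.exp (c * t)) (K * Real.exp (c * x) * c) x := by
        have := (hcd.exp).const_mul K
        refine this.congr_deriv ?_; ring
      exact hE.mul ha.sinh
    exact hN.div hb.sinh (ne_of_gt hsb)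
  apply monotoneOn_of_deriv_nonneg (convex_Ioi 0)
  · exact fun x hx => ((hD x hx).continuousAt).continuousWithinAt
  · rw [interior_Ioi]
    exact fun x hx => ((hD x hx).differentiableAt).differentiableWithinAt
  · intro x hx
    rw [interior_Ioi] at hx
    rw [(hD x hx).deriv]
    apply div_nonneg _ (sq_nonneg _)
    have hkey := keyG α β c hα hβ hc hcb (le_of_lt (Set.mem_Ioi.1 hx))
    have hKE : 0 ≤ K * Real.exp (c * x) := mul_nonneg hK (Real.exp_pos _).le
    nlinarith [mul_nonneg hKE (sub_nonneg.2 hkey)]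

theorem warm_lr_sufficient' (l11 l12 l21 l22 m1 m2 : ℝ)
    (h11 : 0 < l11) (h12 : 0 ≤ l12) (h21 : 0 < l21) (h22 : 0 ≤ l22)
    (hm1 : 0 < m1) (hm2 : 0 < m2)
    (hmu : m1 ≥ m2) (hlam : l11 ≤ l21)
    (hcond : 2 * (l21 - l11) - l12 + l22 + m2 - m1 ≥ 0) :
    MonotoneOn (fun t : ℝ => Real.exp (-((2 * l11 + l12 + m1) * t / 2)) * (2 * l11 * (l11 + l12) / Real.sqrt ((l12 + m1) ^ 2 + 4 * l11 * m1)) * Real.sinh (Real.sqrt ((l12 + m1) ^ 2 + 4 * l11 * m1) * t / 2) / (Real.exp (-((2 * l21 + l22 + m2) * t / 2)) * (2 * l21 * (l21 + l22) / Real.sqrt ((l22 + m2) ^ 2 + 4 * l21 * m2)) * Real.sinh (Real.sqrt ((l22 + m2) ^ 2 + 4 * l21 * m2) * t / 2))) (Set.Ioi (0 : ℝ)) := by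
  set a1 : ℝ := Real.sqrt ((l12 + m1) ^ 2 + 4 * l11 * m1) with ha1
  set a2 : ℝ := Real.sqrt ((l22 + m2) ^ 2 + 4 * l21 * m2) with ha2
  have ha1pos : 0 < a1 := Real.sqrt_pos.2 (by positivity)
  have ha2pos : 0 < a2 := Real.sqrt_pos.2 (by positivity)
  set Δ : ℝ := 2 * (l21 - l11) - l12 + l22 + m2 - m1 with hΔdef
  have hΔ : 0 ≤ Δ := hcond
  set c : ℝ := Δ / 2 with hcdef
  set K : ℝ := (2 * l11 * (l11 + l12) / a1) / (2 * l21 * (l21 + l22) / a2) with hKdef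
  have hK : 0 ≤ K := by positivity
  -- a1 ≥ l12 + m1
  have h1 : l12 + m1 ≤ a1 := by
    rw [ha1, Real.le_sqrt (by positivity) (by positivity)]
    nlinarith
  -- a2 ≤ a1 + Δ
  have hsq1 : a1 ^ 2 = (l12 + m1) ^ 2 + 4 * l11 * m1 := Real.sq_sqrt (by positivity)
  have h2 : a2 ≤ a1 + Δ := by
    have hle : (l22 + m2) ^ 2 + 4 * l21 * m2 ≤ (a1 + Δ) ^ 2 := by
      have expand : (a1 + Δ) ^ 2 = a1 ^ 2 + 2 * a1 * Δ + Δ ^ 2 := by ring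
      have step1 : (l22 + m2) ^ 2 + 4 * l21 * m2
          ≤ (l12 + m1) ^ 2 + 4 * l11 * m1 + 2 * (l12 + m1) * Δ + Δ ^ 2 := by
        nlinarith [mul_nonneg (sub_nonneg.2 hlam) h22, mul_nonneg h11.le (sub_nonneg.2 hmu),
          sq_nonneg (l21 - l11)]
      nlinarith [mul_nonneg (sub_nonneg.2 h1) hΔ]
    calc a2 ≤ Real.sqrt ((a1 + Δ) ^ 2) := Real.sqrt_le_sqrt hle
      _ = a1 + Δ := Real.sqrt_sq (by positivity)
  have hmain := monoAux (a1 / 2) (a2 / 2) c K (by positivity) (by positivity) hK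
    (by positivity) (by rw [hcdef]; linarith)
  have hEq : Set.EqOn
      (fun t : ℝ => K * Real.exp (c * t) * Real.sinh (a1 / 2 * t) / Real.sinh (a2 / 2 * t))
      (fun t : ℝ => Real.exp (-((2 * l11 + l12 + m1) * t / 2)) * (2 * l11 * (l11 + l12) / a1) * Real.sinh (a1 * t / 2) / (Real.exp (-((2 * l21 + l22 + m2) * t / 2)) * (2 * l21 * (l21 + l22) / a2) * Real.sinh (a2 * t / 2)))
      (Set.Ioi (0 : ℝ)) := by
    intro t ht
    have hE2 : Real.exp (-((2 * l21 + l22 + m2) * t / 2)) ≠ 0 := Real.exp_ne_zero _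
    have hC2 : (2 * l21 * (l21 + l22) / a2) ≠ 0 := by positivity
    have hS2 : Real.sinh (a2 * t / 2) ≠ 0 := by
      have : (0:ℝ) < a2 * t / 2 := by
        have := Set.mem_Ioi.1 ht; positivity
      exact ne_of_gt (Real.sinh_pos_iff.2 this)
    have hexp : Real.exp (c * t) = Real.exp (-((2 * l11 + l12 + m1) * t / 2))
        / Real.exp (-((2 * l21 + l22 + m2) * t / 2)) := by
      rw [← Real.exp_sub]
      congr 1
      rw [hcdef, hΔdef]; ring
    simp only
    rw [hexp, show a1 / 2 * t = a1 * t / 2 by ring, show a2 / 2 * t = a2 * t / 2 by ring,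
      hKdef]
    field_simp
  exact (hmain.congr hEq)

theorem warm_lr_sufficient (l11 l12 l21 l22 m1 m2 : ℝ)
    (h11 : 0 < l11) (h12 : 0 ≤ l12) (h21 : 0 < l21) (h22 : 0 ≤ l22)
    (hm1 : 0 < m1) (hm2 : 0 < m2)
    (hmu : m1 ≥ m2) (hlam : l11 ≤ l21)
    (hcond : 2 * (l21 - l11) - l12 + l22 + m2 - m1 ≥ 0) :
    MonotoneOn (fun t : ℝ => phiW l11 l12 m1 t / phiW l21 l22 m2 t) (Set.Ioi (0 : ℝ)) := by
  simp only [phiW, aW]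
  exact warm_lr_sufficient' l11 l12 l21 l22 m1 m2 h11 h12 h21 h22 hm1 hm2 hmu hlam hcond
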